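/- Let $M=\{M_i\}_{i=1}^k$ and $N=\{N_i\}_{i=1}^k$ be measurements on a $D$-dimensional space with outcome distributions $p(M_i)=\frac{1}{D}\|M_i\|_F^2$, $p(N_i)=\frac{1}{D}\|N_i\|_F^2$. Then $\Delta(M,N) \ge \frac{1}{\sqrt{2}} D(\mathbf{p}(M),\mathbf{p}(N))$, where $D(\mathbf{p},\mathbf{q})=\tfrac{1}{2}\sum_i|p_i-q_i|$ is the variational distance. -/

import Mathlib

open Matrix

/-- The phase-invariant normalized Frobenius distance between two square complex
matrices, `Δ(A,B) = inf_{θ ∈ [0,2π)} (1/√(2D)) ‖A - e^{iθ} B‖_F`, where `D` is the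
dimension of the underlying space. -/
noncomputable def Delta {n : Type*} [Fintype n] (A B : Matrix n n ℂ) : ℝ :=
  sInf {x : ℝ | ∃ θ ∈ Set.Ico (0 : ℝ) (2 * Real.pi),
    x = (1 / Real.sqrt (2 * Fintype.card n)) *
      Real.sqrt (((A - Complex.exp (θ * Complex.I) • B)ᴴ *
        (A - Complex.exp (θ * Complex.I) • B)).trace.re)}


attribute [local instance] Matrix.frobeniusNormedAddCommGroup Matrix.frobeniusNormedSpace

lemma trace_re_eq {n : Type*} [Fintype n] [DecidableEq n] (A : Matrix n n ℂ) :
    ((Aᴴ * A).trace).re = ‖A‖ ^ 2 := by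
  have h : ‖A‖ = Real.sqrt (∑ i, ∑ j, ‖A i j‖ ^ 2) := by
    rw [Matrix.frobenius_norm_def, Real.sqrt_eq_rpow]
    norm_num
  rw [h, Real.sq_sqrt (by positivity)]
  simp only [Matrix.trace, Matrix.diag, Matrix.mul_apply, Matrix.conjTranspose_apply]
  rw [Complex.re_sum, Finset.sum_comm]
  congr 1; ext i
  rw [Complex.re_sum]
  congr 1; ext j
  simp [Complex.sq_norm, Complex.star_def, Complex.mul_re,
    Complex.normSq_apply]


lemma Delta_ge {n : Type*} [Fintype n] [DecidableEq n] (A B : Matrix n n ℂ) :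
    (1 / Real.sqrt (2 * Fintype.card n)) * |‖A‖ - ‖B‖| ≤ Delta A B := by
  apply le_csInf
  · exact ⟨_, 0, ⟨le_refl 0, by positivity⟩, rfl⟩
  · rintro x ⟨θ, hθ, rfl⟩
    have hnorm : ‖Complex.exp (θ * Complex.I) • B‖ = ‖B‖ := by
      rw [norm_smul]
      simp [Complex.norm_exp_ofReal_mul_I]
    have h1 : ((A - Complex.exp (θ * Complex.I) • B)ᴴ *
        (A - Complex.exp (θ * Complex.I) • B)).trace.re
        = ‖A - Complex.exp (θ * Complex.I) • B‖ ^ 2 := trace_re_eq _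
    rw [h1, Real.sqrt_sq (norm_nonneg _)]
    apply mul_le_mul_of_nonneg_left _ (by positivity)
    calc |‖A‖ - ‖B‖| = |‖A‖ - ‖Complex.exp (θ * Complex.I) • B‖| := by rw [hnorm]
      _ ≤ ‖A - Complex.exp (θ * Complex.I) • B‖ := abs_norm_sub_norm_le _ _

theorem stmt_8 (D k : ℕ) (hD : 0 < D)
    (M N : Fin k → Matrix (Fin D) (Fin D) ℂ)
    (hM : ∑ i, (M i)ᴴ * M i = 1) (hN : ∑ i, (N i)ᴴ * N i = 1) :
    (1 / Real.sqrt 2) * ((1 / 2) * ∑ i,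
        |(1 / D) * ((M i)ᴴ * M i).trace.re - (1 / D) * ((N i)ᴴ * N i).trace.re|) ≤
      Real.sqrt (∑ i, (Delta (M i) (N i)) ^ 2) := by
  classical
  set a : Fin k → ℝ := fun i => ‖M i‖ with ha'
  set b : Fin k → ℝ := fun i => ‖N i‖ with hb'
  have hDpos : (0:ℝ) < D := by exact_mod_cast hD
  have haM : ∀ i, ((M i)ᴴ * M i).trace.re = a i ^ 2 := fun i => trace_re_eq (M i)
  have hbN : ∀ i, ((N i)ᴴ * N i).trace.re = b i ^ 2 := fun i => trace_re_eq (N i)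
  have hsum_a : ∑ i, a i ^ 2 = D := by
    have h := congrArg (fun X => (Matrix.trace X).re) hM
    simpa [Matrix.trace_sum, Complex.re_sum, haM, Matrix.trace_one] using h
  have hsum_b : ∑ i, b i ^ 2 = D := by
    have h := congrArg (fun X => (Matrix.trace X).re) hN
    simpa [Matrix.trace_sum, Complex.re_sum, hbN, Matrix.trace_one] using h
  have hcard : (Fintype.card (Fin D) : ℝ) = D := by simp
  have hDelta : ∀ i, (a i - b i)^2 / (2*D) ≤ (Delta (M i) (N i))^2 := by
    intro i
    have h := Delta_ge (M i) (N i)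
    rw [hcard] at h
    have h0 : (0:ℝ) ≤ (1 / Real.sqrt (2 * D)) * |a i - b i| := by positivity
    have h2 := pow_le_pow_left₀ h0 h 2
    calc (a i - b i)^2 / (2*D)
        = ((1 / Real.sqrt (2 * D)) * |a i - b i|)^2 := by
          rw [mul_pow, sq_abs, div_pow, one_pow, Real.sq_sqrt (by positivity)]
          ring
      _ ≤ (Delta (M i) (N i))^2 := h2
  have hLHS : ∑ i, |(1/(D:ℝ)) * ((M i)ᴴ * M i).trace.re - (1/D) * ((N i)ᴴ * N i).trace.re|
      = (1/(D:ℝ)) * ∑ i, |a i - b i| * (a i + b i) := by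
    rw [Finset.mul_sum]
    refine Finset.sum_congr rfl fun i _ => ?_
    rw [haM i, hbN i, ← mul_sub, abs_mul, abs_of_nonneg (by positivity : (0:ℝ) ≤ 1/(D:ℝ))]
    congr 1
    have hnn : 0 ≤ a i + b i := add_nonneg (norm_nonneg _) (norm_nonneg _)
    rw [show a i ^2 - b i ^2 = (a i - b i) * (a i + b i) by ring, abs_mul,
      abs_of_nonneg hnn]
  have hCS : ∑ i, |a i - b i| * (a i + b i)
      ≤ Real.sqrt (∑ i, (a i - b i)^2) * Real.sqrt (∑ i, (a i + b i)^2) := by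
    have h := Real.sum_mul_le_sqrt_mul_sqrt Finset.univ
      (fun i => |a i - b i|) (fun i => a i + b i)
    simpa [sq_abs] using h
  have h4D : Real.sqrt (∑ i, (a i + b i)^2) ≤ 2 * Real.sqrt D := by
    have h1 : ∑ i, (a i + b i)^2 ≤ 4*D := by
      calc ∑ i, (a i + b i)^2 ≤ ∑ i, (2*(a i)^2 + 2*(b i)^2) :=
            Finset.sum_le_sum fun i _ => by nlinarith [sq_nonneg (a i - b i)]
        _ = 4*D := by
            rw [Finset.sum_add_distrib, ← Finset.mul_sum, ← Finset.mul_sum, hsum_a, hsum_b]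
            ring
    calc Real.sqrt (∑ i, (a i + b i)^2) ≤ Real.sqrt (4*D) := Real.sqrt_le_sqrt h1
      _ = 2 * Real.sqrt D := by
          rw [show (4:ℝ)*D = 2^2 * D by ring, Real.sqrt_mul (by positivity),
            Real.sqrt_sq (by norm_num)]
  have hfin : Real.sqrt (∑ i, (a i - b i)^2) / Real.sqrt (2*D)
      ≤ Real.sqrt (∑ i, Delta (M i) (N i) ^2) := by
    rw [← Real.sqrt_div (by positivity)]
    apply Real.sqrt_le_sqrt
    rw [Finset.sum_div]
    exact Finset.sum_le_sum fun i _ => hDelta i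
  have hs2 : (0:ℝ) < Real.sqrt 2 := by positivity
  have hsD : (0:ℝ) < Real.sqrt D := Real.sqrt_pos.mpr hDpos
  calc (1 / Real.sqrt 2) * ((1 / 2) * ∑ i,
        |(1 / D) * ((M i)ᴴ * M i).trace.re - (1 / D) * ((N i)ᴴ * N i).trace.re|)
      = (1 / Real.sqrt 2) * ((1/2) * ((1/(D:ℝ)) * ∑ i, |a i - b i| * (a i + b i))) := by
        rw [hLHS]
    _ ≤ (1 / Real.sqrt 2) * ((1/2) * ((1/(D:ℝ)) *
          (Real.sqrt (∑ i, (a i - b i)^2) * (2 * Real.sqrt D)))) := by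
        gcongr
        calc ∑ i, |a i - b i| * (a i + b i)
            ≤ Real.sqrt (∑ i, (a i - b i)^2) * Real.sqrt (∑ i, (a i + b i)^2) := hCS
          _ ≤ Real.sqrt (∑ i, (a i - b i)^2) * (2 * Real.sqrt D) := by
              gcongr
    _ = Real.sqrt (∑ i, (a i - b i)^2) / Real.sqrt (2*D) := by
        rw [Real.sqrt_mul (by norm_num : (0:ℝ) ≤ 2)]
        set s := Real.sqrt (∑ i, (a i - b i)^2) with hs
        set d := Real.sqrt (D:ℝ) with hd
        have hD2 : (D:ℝ) = d * d := (Real.mul_self_sqrt hDpos.le).symm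
        rw [hD2]
        field_simp
    _ ≤ Real.sqrt (∑ i, Delta (M i) (N i) ^2) := hfin
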